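/- arXiv:1902.00010 — 2 statements merged into one kernel-verified Lean document; each statement's English description precedes it below -/
import Mathlib

section
/- Through every point of ℂℙ³ there passes exactly one twistor line: for every nonzero z ∈ ℂ⁴ there exists a unique 2-dimensional complex subspace W ⊆ ℂ⁴ with j̃(W) = W and z ∈ W. -/
/-- The conjugate-linear map `j̃ : ℂ⁴ → ℂ⁴`,
`j̃(z₀,z₁,z₂,z₃) = (−conj z₁, conj z₀, −conj z₃, conj z₂)`,
inducing the fixed-point-free anti-holomorphic involution `j` on `ℂℙ³`. -/
noncomputable def jt (z : Fin 4 → ℂ) : Fin 4 → ℂ :=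
  ![-(starRingEnd ℂ) (z 1), (starRingEnd ℂ) (z 0), -(starRingEnd ℂ) (z 3), (starRingEnd ℂ) (z 2)]

lemma jt_jt (z : Fin 4 → ℂ) : jt (jt z) = -z := by
  funext i; fin_cases i <;> simp [jt]

lemma jt_add (x y : Fin 4 → ℂ) : jt (x + y) = jt x + jt y := by
  funext i; fin_cases i <;> simp [jt, map_add] <;> ring

lemma jt_smul (c : ℂ) (x : Fin 4 → ℂ) : jt (c • x) = (starRingEnd ℂ c) • jt x := by
  funext i; fin_cases i <;> simp [jt, map_mul] <;> ring

lemma jt_zero : jt 0 = 0 := by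
  funext i; fin_cases i <;> simp [jt]

lemma jt_neg (x : Fin 4 → ℂ) : jt (-x) = - jt x := by
  have := jt_smul (-1) x
  simpa using this

lemma jt_ne_smul (z : Fin 4 → ℂ) (hz : z ≠ 0) (a : ℂ) : a • jt z ≠ z := by
  intro h
  have h2 : jt (a • jt z) = jt z := by rw [h]
  rw [jt_smul, jt_jt] at h2
  have h3 : z = a • ((starRingEnd ℂ a) • (-z)) := by rw [h2]; exact h.symm
  have h4 : (1 + a * starRingEnd ℂ a) • z = 0 := by
    rw [add_smul, one_smul, mul_smul]
    rw [show a • (starRingEnd ℂ a) • z = - (a • ((starRingEnd ℂ a) • (-z))) by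
      simp [smul_neg]]
    rw [← h3]; simp
  have h5 : (1 + a * starRingEnd ℂ a) = 0 := by
    by_contra hc
    exact hz (by simpa [hc] using smul_eq_zero.mp h4)
  have h6 : a * starRingEnd ℂ a = -1 := by linear_combination h5
  have : (Complex.normSq a : ℂ) = -1 := by
    rw [← Complex.mul_conj]; exact h6
  have hre : (Complex.normSq a : ℝ) = -1 := by
    exact_mod_cast this
  nlinarith [Complex.normSq_nonneg a]

lemma jt_ne_zero (z : Fin 4 → ℂ) (hz : z ≠ 0) : jt z ≠ 0 := by
  intro h
  apply hz
  have := jt_jt z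
  rw [h, jt_zero] at this
  simpa using this.symm

/-- Through every point of `ℂℙ³` there passes exactly one twistor line: for every nonzero
`z ∈ ℂ⁴` there is a unique 2-dimensional complex subspace `W ⊆ ℂ⁴` with `j̃(W) = W` and
`z ∈ W`. -/
theorem stmt8 (z : Fin 4 → ℂ) (hz : z ≠ 0) :
    ∃! W : Submodule ℂ (Fin 4 → ℂ),
      Module.finrank ℂ W = 2 ∧ jt '' (W : Set (Fin 4 → ℂ)) = (W : Set (Fin 4 → ℂ)) ∧
      z ∈ W := by
  set W : Submodule ℂ (Fin 4 → ℂ) := Submodule.span ℂ (Set.range ![z, jt z]) with hW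
  have hli : LinearIndependent ℂ ![z, jt z] := by
    rw [LinearIndependent.pair_iff]
    intro s t hst
    by_contra hc
    push_neg at hc
    rcases eq_or_ne s 0 with hs | hs
    · subst hs
      have ht := hc rfl
      simp only [zero_smul, zero_add] at hst
      rcases smul_eq_zero.mp hst with h | h
      · exact ht h
      · exact jt_ne_zero z hz h
    · have : (-t/s) • jt z = z := by
        have h1 : t • jt z = -(s • z) := by linear_combination (norm := module) hst
        rw [div_eq_mul_inv, mul_comm, mul_smul, neg_smul, h1]
        simp [smul_smul, inv_mul_cancel₀ hs]
      exact jt_ne_smul z hz _ this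
  have hzW : z ∈ W := Submodule.subset_span ⟨0, rfl⟩
  have hjzW : jt z ∈ W := Submodule.subset_span ⟨1, rfl⟩
  have hrank : Module.finrank ℂ W = 2 := by
    rw [hW, finrank_span_eq_card hli]
    rfl
  have hclosed : ∀ w ∈ W, jt w ∈ W := by
    intro w hw
    induction hw using Submodule.span_induction with
    | mem x hx =>
      rcases hx with ⟨i, rfl⟩
      fin_cases i
      · exact hjzW
      · show jt (jt z) ∈ W
        rw [jt_jt]; exact W.neg_mem hzW
    | zero => rw [jt_zero]; exact W.zero_mem
    | add x y _ _ hx hy => rw [jt_add]; exact W.add_mem hx hy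
    | smul c x _ hx => rw [jt_smul]; exact W.smul_mem _ hx
  have himg : jt '' (W : Set (Fin 4 → ℂ)) = (W : Set (Fin 4 → ℂ)) := by
    apply Set.Subset.antisymm
    · rintro _ ⟨w, hw, rfl⟩
      exact hclosed w hw
    · intro w hw
      refine ⟨-jt w, W.neg_mem (hclosed w hw), ?_⟩
      rw [jt_neg, jt_jt]; simp
  refine ⟨W, ⟨hrank, himg, hzW⟩, ?_⟩
  rintro W' ⟨hr', himg', hzW'⟩
  have hjzW' : jt z ∈ W' := by
    have : jt z ∈ (W' : Set (Fin 4 → ℂ)) := by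
      rw [← himg']; exact ⟨z, hzW', rfl⟩
    exact this
  have hle : W ≤ W' := by
    rw [hW, Submodule.span_le]
    rintro _ ⟨i, rfl⟩
    fin_cases i
    · exact hzW'
    · exact hjzW'
  symm
  exact Submodule.eq_of_le_of_finrank_le hle (by rw [hrank, hr'])
end

section
/- Let f ∈ ℂ[z₀,z₁,z₂,z₃] be an irreducible homogeneous polynomial and Y = V(f) ⊂ ℂℙ³ its zero locus. If Y contains two distinct twistor lines (i.e. there exist distinct 2-dimensional complex subspaces W₁ ≠ W₂ of ℂ⁴ with j̃(Wᵢ) = Wᵢ on which f vanishes identically), then Y is not a cone; here Y is called a cone if there exists a point p ∈ Y such that for every q ∈ Y with q ≠ p the projective line through p and q is contained in Y. -/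
/-- The zero locus `Y = V(f) ⊆ ℂℙ³` is a cone if it has a vertex `[p] ∈ Y` such that for
every point `[q] ∈ Y` different from `[p]`, the projective line through `[p]` and `[q]`
(i.e. `ℙ(span_ℂ{p,q})`) is contained in `Y`. -/
def IsCone (f : MvPolynomial (Fin 4) ℂ) : Prop :=
  ∃ p : Fin 4 → ℂ, p ≠ 0 ∧ MvPolynomial.eval p f = 0 ∧
    ∀ q : Fin 4 → ℂ, q ≠ 0 → MvPolynomial.eval q f = 0 → (¬∃ c : ℂ, q = c • p) →
      ∀ w ∈ Submodule.span ℂ {p, q}, MvPolynomial.eval w f = 0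

open MvPolynomial

lemma eval_aeval' (x : Fin 4 → ℂ) (G : Fin 4 → MvPolynomial (Fin 4) ℂ)
    (f : MvPolynomial (Fin 4) ℂ) :
    eval x (aeval G f) = eval (fun i => eval x (G i)) f := by
  induction f using MvPolynomial.induction_on with
  | C a => simp
  | add p q hp hq => simp only [map_add, hp, hq]
  | mul_X p i hp => simp only [map_mul, aeval_X, eval_X, hp]

lemma X_dvd_sub' (i₀ : Fin 4) (p : MvPolynomial (Fin 4) ℂ) :
    X i₀ ∣ p - aeval (fun j => if j = i₀ then (0 : MvPolynomial (Fin 4) ℂ) else X j) p := by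
  induction p using MvPolynomial.induction_on with
  | C a => simp
  | add p q hp hq =>
    have := dvd_add hp hq
    rw [map_add]
    convert this using 1
    ring
  | mul_X p i hp =>
    rw [map_mul, aeval_X]
    by_cases hi : i = i₀
    · subst hi
      rw [if_pos rfl, mul_zero, sub_zero]
      exact dvd_mul_left _ _
    · rw [if_neg hi]
      have : p * X i - aeval (fun j => if j = i₀ then (0 : MvPolynomial (Fin 4) ℂ) else X j) p * X i
          = (p - aeval (fun j => if j = i₀ then (0 : MvPolynomial (Fin 4) ℂ) else X j) p) * X i := by
        ring
      rw [this]
      exact hp.mul_right _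

lemma key_lemma (f : MvPolynomial (Fin 4) ℂ) (hirr : Irreducible f)
    (c : Fin 4 → ℂ) (i₀ : Fin 4) (hc : c i₀ ≠ 0)
    (hvan : ∀ x : Fin 4 → ℂ, (∑ j, c j * x j) = 0 → eval x f = 0)
    (q : Fin 4 → ℂ) (hq : eval q f = 0) : (∑ j, c j * q j) = 0 := by
  set L : MvPolynomial (Fin 4) ℂ := ∑ j, C (c j) * X j with hL
  have evalL : ∀ x : Fin 4 → ℂ, eval x L = ∑ j, c j * x j := by
    intro x; simp [hL]
  set G : Fin 4 → MvPolynomial (Fin 4) ℂ :=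
    fun i => if i = i₀ then C (c i₀)⁻¹ * ((1 + C (c i₀)) * X i₀ - L) else X i with hG
  set G' : Fin 4 → MvPolynomial (Fin 4) ℂ := fun i => if i = i₀ then L else X i with hG'
  have hGi0 : G i₀ = C (c i₀)⁻¹ * ((1 + C (c i₀)) * X i₀ - L) := if_pos rfl
  have hGne : ∀ j, j ≠ i₀ → G j = X j := fun j hj => if_neg hj
  have hG'i0 : G' i₀ = L := if_pos rfl
  have hG'ne : ∀ j, j ≠ i₀ → G' j = X j := fun j hj => if_neg hj
  -- aeval G' applied to L
  have haL : aeval G' L = L + C (c i₀) * (L - X i₀) := by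
    rw [hL, map_sum]
    have step : ∀ j : Fin 4, aeval G' (C (c j) * X j)
        = C (c j) * X j + (if j = i₀ then C (c j) * (L - X j) else 0) := by
      intro j
      rw [map_mul, aeval_X]
      by_cases h : j = i₀
      · subst h
        rw [hG'i0, if_pos rfl]
        simp only [algebraMap_eq, aeval_C]
        ring
      · rw [hG'ne j h, if_neg h]
        simp only [algebraMap_eq, aeval_C]
        ring
    rw [Finset.sum_congr rfl fun j _ => step j, Finset.sum_add_distrib,
      Finset.sum_ite_eq' Finset.univ i₀ (fun j => C (c j) * (L - X j))]
    simp [hL]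
  have hGG' : ∀ i, aeval G' (G i) = X i := by
    intro i
    by_cases hi : i = i₀
    · subst hi
      rw [hGi0]
      simp only [map_mul, map_sub, map_add, map_one, aeval_C, aeval_X, algebraMap_eq, haL, hG'i0]
      have : (C (c i)⁻¹ : MvPolynomial (Fin 4) ℂ) * ((1 + C (c i)) * L - (L + C (c i) * (L - X i)))
          = (C (c i)⁻¹ * C (c i)) * X i := by ring
      rw [this, ← C_mul, inv_mul_cancel₀ hc, C_1, one_mul]
    · rw [hGne i hi, aeval_X, hG'ne i hi]
  have hcomp : aeval G' (aeval G f) = f := by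
    have hid : (aeval G').comp (aeval G) = AlgHom.id ℂ (MvPolynomial (Fin 4) ℂ) := by
      apply algHom_ext
      intro i
      simp only [AlgHom.comp_apply, aeval_X, AlgHom.id_apply, hGG' i]
    have := AlgHom.congr_fun hid f
    simpa using this
  set g := aeval G f with hg
  -- g vanishes whenever the i₀-th coordinate vanishes
  have hg0 : ∀ y : Fin 4 → ℂ, y i₀ = 0 → eval y g = 0 := by
    intro y hy
    rw [hg, eval_aeval']
    apply hvan
    have hGj : ∀ j, j ≠ i₀ → eval y (G j) = y j := by
      intro j hj; rw [hGne j hj, eval_X]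
    have hGi : eval y (G i₀) = (c i₀)⁻¹ * ((1 + c i₀) * y i₀ - ∑ j, c j * y j) := by
      rw [hGi0, map_mul, map_sub, map_mul, map_add, eval_C, eval_C, eval_X, evalL]
      simp
    have step : ∀ j : Fin 4, c j * eval y (G j)
        = c j * y j + (if j = i₀ then c j * (eval y (G j) - y j) else 0) := by
      intro j
      by_cases h : j = i₀
      · simp only [if_pos h]; ring
      · simp only [if_neg h, hGj j h]; ring
    rw [Finset.sum_congr rfl fun j _ => step j, Finset.sum_add_distrib,
      Finset.sum_ite_eq' Finset.univ i₀ (fun j => c j * (eval y (G j) - y j))]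
    simp only [Finset.mem_univ, if_pos]
    rw [hGi, hy]
    field_simp
    ring
  -- X i₀ divides g
  have hτ : aeval (fun j => if j = i₀ then (0 : MvPolynomial (Fin 4) ℂ) else X j) g = 0 := by
    apply MvPolynomial.funext
    intro x
    rw [eval_aeval', map_zero]
    apply hg0
    simp
  have hdvd : X i₀ ∣ g := by
    have := X_dvd_sub' i₀ g
    rwa [hτ, sub_zero] at this
  obtain ⟨h, hgh⟩ := hdvd
  have hfLh : f = L * aeval G' h := by
    rw [← hcomp, hgh, map_mul]
    congr 1
    rw [aeval_X, hG'i0]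
  have hLnu : ¬ IsUnit L := by
    intro hu
    have := hu.map (eval (0 : Fin 4 → ℂ))
    rw [evalL] at this
    simp at this
  have hunit : IsUnit (aeval G' h) := (hirr.isUnit_or_isUnit hfLh).resolve_left hLnu
  have h0 : eval q L * eval q (aeval G' h) = 0 := by
    rw [← map_mul, ← hfLh, hq]
  have hne : eval q (aeval G' h) ≠ 0 := (hunit.map (eval q)).ne_zero
  have : eval q L = 0 := by
    rcases mul_eq_zero.mp h0 with h' | h'
    · exact h'
    · exact absurd h' hne
  rwa [evalL] at this


lemma jt_pair_indep (q : Fin 4 → ℂ) (hq : q ≠ 0) : LinearIndependent ℂ ![q, jt q] := by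
  rw [LinearIndependent.pair_iff]
  intro s t hst
  have e : ∀ i, s * q i + t * jt q i = 0 := by
    intro i
    have := congrFun hst i
    simpa using this
  have h0 : s * q 0 + t * (-(starRingEnd ℂ) (q 1)) = 0 := by simpa [jt] using e 0
  have h1 : s * q 1 + t * ((starRingEnd ℂ) (q 0)) = 0 := by simpa [jt] using e 1
  have h2 : s * q 2 + t * (-(starRingEnd ℂ) (q 3)) = 0 := by simpa [jt] using e 2
  have h3 : s * q 3 + t * ((starRingEnd ℂ) (q 2)) = 0 := by simpa [jt] using e 3
  have h0c := congrArg (starRingEnd ℂ) h0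
  have h1c := congrArg (starRingEnd ℂ) h1
  have h2c := congrArg (starRingEnd ℂ) h2
  have h3c := congrArg (starRingEnd ℂ) h3
  simp only [map_add, map_mul, map_neg, Complex.conj_conj, map_zero] at h0c h1c h2c h3c
  set N : ℂ := s * (starRingEnd ℂ) s + t * (starRingEnd ℂ) t with hN
  have k0 : N * q 0 = 0 := by rw [hN]; linear_combination (starRingEnd ℂ) s * h0 + t * h1c
  have k1 : N * q 1 = 0 := by rw [hN]; linear_combination (starRingEnd ℂ) s * h1 - t * h0c
  have k2 : N * q 2 = 0 := by rw [hN]; linear_combination (starRingEnd ℂ) s * h2 + t * h3c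
  have k3 : N * q 3 = 0 := by rw [hN]; linear_combination (starRingEnd ℂ) s * h3 - t * h2c
  obtain ⟨i, hi⟩ : ∃ i, q i ≠ 0 := by
    by_contra hcon
    push_neg at hcon
    exact hq (funext hcon)
  have hN0 : N = 0 := by
    fin_cases i
    · exact (mul_eq_zero.mp k0).resolve_right hi
    · exact (mul_eq_zero.mp k1).resolve_right hi
    · exact (mul_eq_zero.mp k2).resolve_right hi
    · exact (mul_eq_zero.mp k3).resolve_right hi
  rw [hN, Complex.mul_conj, Complex.mul_conj] at hN0
  have hreal : Complex.normSq s + Complex.normSq t = 0 := by exact_mod_cast hN0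
  have hs : Complex.normSq s = 0 := by
    nlinarith [Complex.normSq_nonneg s, Complex.normSq_nonneg t]
  have ht : Complex.normSq t = 0 := by
    nlinarith [Complex.normSq_nonneg s, Complex.normSq_nonneg t]
  exact ⟨Complex.normSq_eq_zero.mp hs, Complex.normSq_eq_zero.mp ht⟩

/-- If the zero locus `Y = V(f)` of an irreducible homogeneous polynomial `f` contains two
distinct twistor lines, then `Y` is not a cone. -/
theorem stmt13 (d : ℕ) (f : MvPolynomial (Fin 4) ℂ)
    (hirr : Irreducible f) (hhom : f.IsHomogeneous d)
    (W₁ W₂ : Submodule ℂ (Fin 4 → ℂ)) (hne : W₁ ≠ W₂)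
    (h1 : Module.finrank ℂ W₁ = 2)
    (hj1 : jt '' (W₁ : Set (Fin 4 → ℂ)) = (W₁ : Set (Fin 4 → ℂ)))
    (hv1 : ∀ w ∈ W₁, MvPolynomial.eval w f = 0)
    (h2 : Module.finrank ℂ W₂ = 2)
    (hj2 : jt '' (W₂ : Set (Fin 4 → ℂ)) = (W₂ : Set (Fin 4 → ℂ)))
    (hv2 : ∀ w ∈ W₂, MvPolynomial.eval w f = 0) :
    ¬IsCone f := by
  rintro ⟨p, hp0, hpf, H⟩
  -- Step 1: two distinct twistor lines intersect trivially
  have hbot : W₁ ⊓ W₂ = ⊥ := by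
    by_contra hb
    obtain ⟨q, hqmem, hq0⟩ := Submodule.exists_mem_ne_zero_of_ne_bot hb
    have hq1 : q ∈ W₁ := (Submodule.mem_inf.mp hqmem).1
    have hq2 : q ∈ W₂ := (Submodule.mem_inf.mp hqmem).2
    have hjq1 : jt q ∈ W₁ := by
      have : jt q ∈ jt '' (W₁ : Set (Fin 4 → ℂ)) := Set.mem_image_of_mem _ hq1
      rw [hj1] at this
      exact this
    have hjq2 : jt q ∈ W₂ := by
      have : jt q ∈ jt '' (W₂ : Set (Fin 4 → ℂ)) := Set.mem_image_of_mem _ hq2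
      rw [hj2] at this
      exact this
    have hli := jt_pair_indep q hq0
    have hfr2 : Module.finrank ℂ (Submodule.span ℂ {q, jt q}) = 2 := by
      have := finrank_span_eq_card hli
      rw [Matrix.range_cons_cons_empty] at this
      simpa using this
    have e1 : Submodule.span ℂ {q, jt q} = W₁ := by
      apply Submodule.eq_of_le_of_finrank_eq
      · rw [Submodule.span_le]
        rintro x hx
        rcases hx with rfl | hx
        · exact hq1
        · rw [Set.mem_singleton_iff] at hx
          subst hx
          exact hjq1
      · rw [hfr2, h1]
    have e2 : Submodule.span ℂ {q, jt q} = W₂ := by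
      apply Submodule.eq_of_le_of_finrank_eq
      · rw [Submodule.span_le]
        rintro x hx
        rcases hx with rfl | hx
        · exact hq2
        · rw [Set.mem_singleton_iff] at hx
          subst hx
          exact hjq2
      · rw [hfr2, h2]
    exact hne (e1 ▸ e2)
  -- Step 2: the cone vertex spreads vanishing over a hyperplane
  have coneVanish : ∀ (W : Submodule ℂ (Fin 4 → ℂ)), Module.finrank ℂ W = 2 →
      (∀ w ∈ W, eval w f = 0) → p ∉ W →
      ∀ w ∈ (Submodule.span ℂ {p}) ⊔ W, eval w f = 0 := by
    intro W hW hv hpW w hw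
    rcases Submodule.mem_sup.mp hw with ⟨y, hy, z, hz, rfl⟩
    rcases Submodule.mem_span_singleton.mp hy with ⟨s, rfl⟩
    have hnm : ∀ u, u ∈ W → u ≠ 0 → ¬∃ c : ℂ, u = c • p := by
      rintro u huW hu0 ⟨cc, rfl⟩
      rcases eq_or_ne cc 0 with rfl | hcc
      · simp at hu0
      · apply hpW
        have := W.smul_mem cc⁻¹ huW
        rwa [smul_smul, inv_mul_cancel₀ hcc, one_smul] at this
    by_cases hz0 : z = 0
    · subst hz0
      have hWne : W ≠ ⊥ := by
        intro h
        rw [h, finrank_bot] at hW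
        exact absurd hW (by norm_num)
      obtain ⟨w₁, hw₁W, hw₁0⟩ := Submodule.exists_mem_ne_zero_of_ne_bot hWne
      apply H w₁ hw₁0 (hv w₁ hw₁W) (hnm w₁ hw₁W hw₁0)
      rw [add_zero]
      exact Submodule.mem_span_pair.mpr ⟨s, 0, by simp⟩
    · apply H z hz0 (hv z hz) (hnm z hz hz0)
      exact Submodule.mem_span_pair.mpr ⟨s, 1, by simp⟩
  -- Step 3: main contradiction machine
  have main : ∀ W : Submodule ℂ (Fin 4 → ℂ), Module.finrank ℂ W = 2 →
      (∀ w ∈ W, eval w f = 0) → p ∉ W → False := by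
    intro W hW hv hpW
    set U := (Submodule.span ℂ {p}) ⊔ W with hU
    have hUv := coneVanish W hW hv hpW
    have hinf : (Submodule.span ℂ {p}) ⊓ W = ⊥ := by
      rw [Submodule.eq_bot_iff]
      intro x hx
      obtain ⟨hx1, hx2⟩ := Submodule.mem_inf.mp hx
      rcases Submodule.mem_span_singleton.mp hx1 with ⟨s, rfl⟩
      rcases eq_or_ne s 0 with rfl | hs
      · simp
      · exfalso
        apply hpW
        have := W.smul_mem s⁻¹ hx2
        rwa [smul_smul, inv_mul_cancel₀ hs, one_smul] at this
    have htot : Module.finrank ℂ (Fin 4 → ℂ) = 4 := by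
      simp [Module.finrank_pi]
    have hfrU : Module.finrank ℂ U = 3 := by
      have hh := Submodule.finrank_sup_add_finrank_inf_eq (Submodule.span ℂ {p}) W
      rw [hinf, finrank_span_singleton hp0, hW, finrank_bot, ← hU] at hh
      omega
    have hUlt : U < ⊤ := by
      rw [lt_top_iff_ne_top]
      intro h
      rw [h, finrank_top, htot] at hfrU
      norm_num at hfrU
    obtain ⟨φ, hφ0, hφmap⟩ := Submodule.exists_dual_map_eq_bot_of_lt_top hUlt inferInstance
    have hUker : U ≤ LinearMap.ker φ := by
      intro x hx
      rw [LinearMap.mem_ker]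
      have hmem : φ x ∈ U.map φ := Submodule.mem_map_of_mem hx
      rw [hφmap] at hmem
      simpa using hmem
    have hkerU : LinearMap.ker φ = U := by
      symm
      apply Submodule.eq_of_le_of_finrank_le hUker
      have hrk := LinearMap.finrank_range_add_finrank_ker φ
      rw [htot] at hrk
      have hrange : LinearMap.range φ ≠ ⊥ := by
        simpa [LinearMap.range_eq_bot] using hφ0
      have hrpos : 0 < Module.finrank ℂ (LinearMap.range φ) := by
        rcases Nat.eq_zero_or_pos (Module.finrank ℂ (LinearMap.range φ)) with h | h
        · exact absurd (Submodule.finrank_eq_zero.mp h) hrange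
        · exact h
      omega
    set c : Fin 4 → ℂ := fun j => φ (fun k => if j = k then 1 else 0) with hc
    have hφsum : ∀ x, φ x = ∑ j, c j * x j := by
      intro x
      rw [LinearMap.pi_apply_eq_sum_univ φ x]
      refine Finset.sum_congr rfl fun j _ => ?_
      rw [hc]
      simp [smul_eq_mul, mul_comm]
    obtain ⟨i₀, hci₀⟩ : ∃ i₀, c i₀ ≠ 0 := by
      by_contra hcon
      push_neg at hcon
      apply hφ0
      apply LinearMap.ext
      intro x
      rw [hφsum x]
      simp [hcon]
    have hvan : ∀ x : Fin 4 → ℂ, (∑ j, c j * x j) = 0 → eval x f = 0 := by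
      intro x hx
      apply hUv
      rw [← hU, ← hkerU, LinearMap.mem_ker, hφsum]
      exact hx
    have hall := key_lemma f hirr c i₀ hci₀ hvan
    have hW1U : W₁ ≤ U := by
      intro x hx
      rw [← hkerU, LinearMap.mem_ker, hφsum]
      exact hall x (hv1 x hx)
    have hW2U : W₂ ≤ U := by
      intro x hx
      rw [← hkerU, LinearMap.mem_ker, hφsum]
      exact hall x (hv2 x hx)
    have hsup : Module.finrank ℂ (W₁ ⊔ W₂ : Submodule ℂ (Fin 4 → ℂ)) = 4 := by
      have hh := Submodule.finrank_sup_add_finrank_inf_eq W₁ W₂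
      rw [hbot, h1, h2, finrank_bot] at hh
      omega
    have hle : Module.finrank ℂ (W₁ ⊔ W₂ : Submodule ℂ (Fin 4 → ℂ)) ≤ Module.finrank ℂ U :=
      Submodule.finrank_mono (sup_le hW1U hW2U)
    rw [hsup, hfrU] at hle
    omega
  -- Step 4: the vertex misses at least one of the two lines
  by_cases hp1 : p ∈ W₁
  · have hp2 : p ∉ W₂ := by
      intro hp2
      have : p ∈ W₁ ⊓ W₂ := Submodule.mem_inf.mpr ⟨hp1, hp2⟩
      rw [hbot] at this
      exact hp0 (Submodule.mem_bot ℂ |>.mp this)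
    exact main W₂ h2 hv2 hp2
  · exact main W₁ h1 hv1 hp1
end
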